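/- Let (C_n, p) be a generic framework on the n-cycle in R^1 with f forward edges and b backward edges (f + b = n, f ≥ 1, b ≥ 1). Then every nonzero equilibrium stress matrix Ω of (C_n,p) has signature (f−1, 2, b−1) or (b−1, 2, f−1) (counting positive, zero, and negative eigenvalues). -/

import Mathlib

open Matrix

/-- Number of positive eigenvalues of a (Hermitian) real matrix. -/
noncomputable def posCount {n : ℕ} (A : Matrix (Fin n) (Fin n) ℝ) : ℕ :=
  if h : A.IsHermitian then Fintype.card {i // 0 < h.eigenvalues i} else 0

/-- Number of negative eigenvalues of a (Hermitian) real matrix. -/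
noncomputable def negCount {n : ℕ} (A : Matrix (Fin n) (Fin n) ℝ) : ℕ :=
  if h : A.IsHermitian then Fintype.card {i // h.eigenvalues i < 0} else 0

/-- Number of zero eigenvalues of a (Hermitian) real matrix. -/
noncomputable def zeroCount {n : ℕ} (A : Matrix (Fin n) (Fin n) ℝ) : ℕ :=
  if h : A.IsHermitian then Fintype.card {i // h.eigenvalues i = 0} else 0

/-- `Ω` is an equilibrium stress matrix of the one-dimensional framework on the cycle
(with vertices `0, 1, …, n+2` in cyclic order): symmetric, supported on the diagonal and
the cycle edges, with zero row sums and satisfying the equilibrium condition. -/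
def IsCycleStressMatrix (n : ℕ) (p : Fin (n + 3) → ℝ)
    (Ω : Matrix (Fin (n + 3)) (Fin (n + 3)) ℝ) : Prop :=
  Ω.IsHermitian ∧
  (∀ i j, Ω i j ≠ 0 → i = j ∨ j = i + 1 ∨ i = j + 1) ∧
  (∀ i, ∑ j, Ω i j = 0) ∧
  (∀ i, ∑ j, Ω i j * p j = 0)

namespace Stmt8Aux

lemma quad_eq_sum {N : ℕ} {A : Matrix (Fin N) (Fin N) ℝ} (hA : A.IsHermitian) (x : Fin N → ℝ) :
    x ⬝ᵥ A *ᵥ x = ∑ i, hA.eigenvalues i *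
      ((star (hA.eigenvectorUnitary : Matrix (Fin N) (Fin N) ℝ) *ᵥ x) i)^2 := by
  set U := (hA.eigenvectorUnitary : Matrix (Fin N) (Fin N) ℝ) with hU
  conv_lhs => rw [hA.spectral_theorem, Unitary.conjStarAlgAut_apply, ← hU]
  rw [← mulVec_mulVec, ← mulVec_mulVec, dotProduct_mulVec]
  have hx : x ᵥ* U = star U *ᵥ x := by
    rw [star_eq_conjTranspose, mulVec_conjTranspose]; simp
  rw [hx]
  simp only [dotProduct, mulVec_diagonal, Function.comp_apply, RCLike.ofReal_real_eq_id, id]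
  exact Finset.sum_congr rfl fun i _ => by ring

lemma count_le_of_posdef {N : ℕ} {A : Matrix (Fin N) (Fin N) ℝ} (hA : A.IsHermitian)
    (W : Submodule ℝ (Fin N → ℝ)) (hW : ∀ x ∈ W, x ≠ 0 → 0 < x ⬝ᵥ A *ᵥ x) :
    Module.finrank ℝ W ≤ Fintype.card {i // 0 < hA.eigenvalues i} := by
  classical
  set U := (hA.eigenvectorUnitary : Matrix (Fin N) (Fin N) ℝ)
  set ψ : (Fin N → ℝ) →ₗ[ℝ] ({i // 0 < hA.eigenvalues i} → ℝ) :=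
    LinearMap.pi (fun j => (LinearMap.proj j.1).comp (Matrix.mulVecLin (star U)))
  have hinj : Function.Injective (ψ.domRestrict W) := by
    rw [← LinearMap.ker_eq_bot, LinearMap.ker_eq_bot']
    rintro ⟨x, hx⟩ h0
    have hψ : ∀ j : {i // 0 < hA.eigenvalues i}, (star U *ᵥ x) j.1 = 0 := by
      intro j
      have := congrFun h0 j
      simpa [ψ, Matrix.mulVecLin_apply] using this
    by_contra hxx
    have hxne : x ≠ 0 := by simpa [Subtype.ext_iff] using hxx
    have hpos := hW x hx hxne
    rw [quad_eq_sum hA x] at hpos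
    have hle : ∑ i, hA.eigenvalues i * ((star U *ᵥ x) i)^2 ≤ 0 := by
      apply Finset.sum_nonpos
      intro i _
      by_cases hi : 0 < hA.eigenvalues i
      · rw [hψ ⟨i, hi⟩]; simp
      · exact mul_nonpos_of_nonpos_of_nonneg (le_of_not_gt hi) (sq_nonneg _)
    linarith
  have := LinearMap.finrank_le_finrank_of_injective hinj
  simpa [Module.finrank_fintype_fun_eq_card] using this

lemma count_le_of_negdef {N : ℕ} {A : Matrix (Fin N) (Fin N) ℝ} (hA : A.IsHermitian)
    (W : Submodule ℝ (Fin N → ℝ)) (hW : ∀ x ∈ W, x ≠ 0 → x ⬝ᵥ A *ᵥ x < 0) :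
    Module.finrank ℝ W ≤ Fintype.card {i // hA.eigenvalues i < 0} := by
  classical
  set U := (hA.eigenvectorUnitary : Matrix (Fin N) (Fin N) ℝ)
  set ψ : (Fin N → ℝ) →ₗ[ℝ] ({i // hA.eigenvalues i < 0} → ℝ) :=
    LinearMap.pi (fun j => (LinearMap.proj j.1).comp (Matrix.mulVecLin (star U)))
  have hinj : Function.Injective (ψ.domRestrict W) := by
    rw [← LinearMap.ker_eq_bot, LinearMap.ker_eq_bot']
    rintro ⟨x, hx⟩ h0
    have hψ : ∀ j : {i // hA.eigenvalues i < 0}, (star U *ᵥ x) j.1 = 0 := by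
      intro j
      have := congrFun h0 j
      simpa [ψ, Matrix.mulVecLin_apply] using this
    by_contra hxx
    have hxne : x ≠ 0 := by simpa [Subtype.ext_iff] using hxx
    have hpos := hW x hx hxne
    rw [quad_eq_sum hA x] at hpos
    have hle : (0:ℝ) ≤ ∑ i, hA.eigenvalues i * ((star U *ᵥ x) i)^2 := by
      apply Finset.sum_nonneg
      intro i _
      by_cases hi : hA.eigenvalues i < 0
      · rw [hψ ⟨i, hi⟩]; simp
      · exact mul_nonneg (le_of_not_gt hi) (sq_nonneg _)
    linarith
  have := LinearMap.finrank_le_finrank_of_injective hinj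
  simpa [Module.finrank_fintype_fun_eq_card] using this

lemma counts_sum {N : ℕ} {A : Matrix (Fin N) (Fin N) ℝ} (hA : A.IsHermitian) :
    Fintype.card {i // 0 < hA.eigenvalues i} + Fintype.card {i // hA.eigenvalues i < 0}
      + Fintype.card {i // hA.eigenvalues i = 0} = N := by
  classical
  simp only [Fintype.card_subtype, Finset.card_filter]
  rw [← Finset.sum_add_distrib, ← Finset.sum_add_distrib]
  have h : ∀ i : Fin N, ((if 0 < hA.eigenvalues i then 1 else 0)
      + (if hA.eigenvalues i < 0 then 1 else 0)
      + (if hA.eigenvalues i = 0 then 1 else 0) : ℕ) = 1 := by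
    intro i
    rcases lt_trichotomy (hA.eigenvalues i) 0 with h | h | h
    · simp [h, not_lt_of_gt h, h.ne]
    · simp [h]
    · simp [h, not_lt_of_gt h, h.ne']
  rw [Finset.sum_congr rfl fun i _ => h i]
  simp

lemma zero_eigs_eq_nullity {N : ℕ} {A : Matrix (Fin N) (Fin N) ℝ} (hA : A.IsHermitian) :
    Fintype.card {i // hA.eigenvalues i = 0}
      = Module.finrank ℝ (LinearMap.ker A.mulVecLin) := by
  classical
  have hrank : A.rank = Fintype.card {i // hA.eigenvalues i ≠ 0} := hA.rank_eq_card_non_zero_eigs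
  have hcompl : Fintype.card {i // hA.eigenvalues i = 0}
      = N - Fintype.card {i // hA.eigenvalues i ≠ 0} := by
    have := Fintype.card_subtype_compl (fun i : Fin N => hA.eigenvalues i ≠ 0)
    simp only [not_not, Fintype.card_fin] at this
    exact this
  have hrn : A.rank + Module.finrank ℝ (LinearMap.ker A.mulVecLin) = N := by
    have := LinearMap.finrank_range_add_finrank_ker A.mulVecLin
    simpa [Matrix.rank, Module.finrank_fintype_fun_eq_card] using this
  have hle : Fintype.card {i // hA.eigenvalues i ≠ 0} ≤ N := by
    rw [← hrank]; omega
  omega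

open Fin.NatCast in
lemma const_of_step {N : ℕ} [NeZero N] (x : Fin N → ℝ)
    (h : ∀ i : Fin N, x (i + 1) = x i) (i : Fin N) : x i = x 0 := by
  have hk : ∀ k : ℕ, x (k : Fin N) = x 0 := by
    intro k
    induction k with
    | zero => simp
    | succ k ih => rw [Nat.cast_succ, h, ih]
  simpa [Fin.cast_val_eq_self] using hk i.val

lemma posdef_subspace_bound {N : ℕ} [NeZero N] {A : Matrix (Fin N) (Fin N) ℝ}
    (hA : A.IsHermitian) (w : Fin N → ℝ)
    (hq : ∀ x : Fin N → ℝ, x ⬝ᵥ A *ᵥ x = ∑ i, w i * (x i - x (i + 1)) ^ 2)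
    (hw : ∀ i, w i ≠ 0) :
    N - ((Finset.univ.filter (fun i : Fin N => w i < 0)).card + 1)
      ≤ Fintype.card {i // 0 < hA.eigenvalues i} := by
  classical
  set S := Finset.univ.filter (fun i : Fin N => w i < 0) with hS
  set Φ : (Fin N → ℝ) →ₗ[ℝ] (({ i // i ∈ S } → ℝ) × ℝ) :=
    LinearMap.prod
      (LinearMap.pi (fun j : {i // i ∈ S} =>
        (LinearMap.proj j.1 : (Fin N → ℝ) →ₗ[ℝ] ℝ) - LinearMap.proj (j.1 + 1)))
      (LinearMap.proj 0) with hΦ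
  have hmem : ∀ x ∈ LinearMap.ker Φ, (∀ j ∈ S, x j = x (j + 1)) ∧ x 0 = 0 := by
    intro x hx
    rw [LinearMap.mem_ker] at hx
    have h1 := congrArg Prod.fst hx
    have h2 := congrArg Prod.snd hx
    refine ⟨fun j hj => ?_, by simpa [Φ] using h2⟩
    have := congrFun h1 ⟨j, hj⟩
    simpa [Φ, sub_eq_zero] using this
  have hposdef : ∀ x ∈ LinearMap.ker Φ, x ≠ 0 → 0 < x ⬝ᵥ A *ᵥ x := by
    intro x hx hxne
    obtain ⟨hstep, h0⟩ := hmem x hx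
    have hterm : ∀ i : Fin N, 0 ≤ w i * (x i - x (i + 1)) ^ 2 := by
      intro i
      by_cases hi : w i < 0
      · have : x i = x (i + 1) := hstep i (by simp [hS, hi])
        simp [this]
      · exact mul_nonneg (le_of_not_gt hi) (sq_nonneg _)
    have hge : 0 ≤ x ⬝ᵥ A *ᵥ x := by
      rw [hq]; exact Finset.sum_nonneg fun i _ => hterm i
    rcases eq_or_lt_of_le hge with heq | hlt
    · exfalso
      have hall : ∀ i : Fin N, w i * (x i - x (i + 1)) ^ 2 = 0 := by
        have h' := (Finset.sum_eq_zero_iff_of_nonneg (fun i _ => hterm i)).1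
          (by rw [← hq]; exact heq.symm)
        exact fun i => h' i (Finset.mem_univ i)
      have hdiff : ∀ i : Fin N, x (i + 1) = x i := by
        intro i
        rcases mul_eq_zero.1 (hall i) with h | h
        · exact absurd h (hw i)
        · have := pow_eq_zero_iff (n := 2) (by norm_num) |>.1 h
          have := sub_eq_zero.1 this
          exact this.symm
      exact hxne (funext fun i => by rw [const_of_step x hdiff i, h0]; simp)
    · exact hlt
  have hb := count_le_of_posdef hA (LinearMap.ker Φ) hposdef
  have hrn := LinearMap.finrank_range_add_finrank_ker Φ
  have hcod : Module.finrank ℝ (({ i // i ∈ S } → ℝ) × ℝ) = S.card + 1 := by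
    simp [Module.finrank_prod, Module.finrank_fintype_fun_eq_card, Fintype.card_coe]
  have hrange : Module.finrank ℝ (LinearMap.range Φ) ≤ S.card + 1 := by
    rw [← hcod]; exact (LinearMap.range Φ).finrank_le
  have hdom : Module.finrank ℝ (Fin N → ℝ) = N := by
    simp [Module.finrank_fintype_fun_eq_card]
  rw [hdom] at hrn
  omega

lemma negdef_subspace_bound {N : ℕ} [NeZero N] {A : Matrix (Fin N) (Fin N) ℝ}
    (hA : A.IsHermitian) (w : Fin N → ℝ)
    (hq : ∀ x : Fin N → ℝ, x ⬝ᵥ A *ᵥ x = ∑ i, w i * (x i - x (i + 1)) ^ 2)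
    (hw : ∀ i, w i ≠ 0) :
    N - ((Finset.univ.filter (fun i : Fin N => 0 < w i)).card + 1)
      ≤ Fintype.card {i // hA.eigenvalues i < 0} := by
  classical
  set S := Finset.univ.filter (fun i : Fin N => 0 < w i) with hS
  set Φ : (Fin N → ℝ) →ₗ[ℝ] (({ i // i ∈ S } → ℝ) × ℝ) :=
    LinearMap.prod
      (LinearMap.pi (fun j : {i // i ∈ S} =>
        (LinearMap.proj j.1 : (Fin N → ℝ) →ₗ[ℝ] ℝ) - LinearMap.proj (j.1 + 1)))
      (LinearMap.proj 0) with hΦ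
  have hmem : ∀ x ∈ LinearMap.ker Φ, (∀ j ∈ S, x j = x (j + 1)) ∧ x 0 = 0 := by
    intro x hx
    rw [LinearMap.mem_ker] at hx
    have h1 := congrArg Prod.fst hx
    have h2 := congrArg Prod.snd hx
    refine ⟨fun j hj => ?_, by simpa [Φ] using h2⟩
    have := congrFun h1 ⟨j, hj⟩
    simpa [Φ, sub_eq_zero] using this
  have hnegdef : ∀ x ∈ LinearMap.ker Φ, x ≠ 0 → x ⬝ᵥ A *ᵥ x < 0 := by
    intro x hx hxne
    obtain ⟨hstep, h0⟩ := hmem x hx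
    have hterm : ∀ i : Fin N, w i * (x i - x (i + 1)) ^ 2 ≤ 0 := by
      intro i
      by_cases hi : 0 < w i
      · have : x i = x (i + 1) := hstep i (by simp [hS, hi])
        simp [this]
      · exact mul_nonpos_of_nonpos_of_nonneg (le_of_not_gt hi) (sq_nonneg _)
    have hge : x ⬝ᵥ A *ᵥ x ≤ 0 := by
      rw [hq]; exact Finset.sum_nonpos fun i _ => hterm i
    rcases eq_or_lt_of_le hge with heq | hlt
    · exfalso
      have hall : ∀ i : Fin N, w i * (x i - x (i + 1)) ^ 2 = 0 := by
        have h' : ∀ i ∈ Finset.univ, -(w i * (x i - x (i + 1)) ^ 2) = 0 := by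
          apply (Finset.sum_eq_zero_iff_of_nonneg (fun i _ => neg_nonneg.2 (hterm i))).1
          rw [Finset.sum_neg_distrib, ← hq, heq, neg_zero]
        intro i
        have := h' i (Finset.mem_univ i)
        linarith
      have hdiff : ∀ i : Fin N, x (i + 1) = x i := by
        intro i
        rcases mul_eq_zero.1 (hall i) with h | h
        · exact absurd h (hw i)
        · have := pow_eq_zero_iff (n := 2) (by norm_num) |>.1 h
          have := sub_eq_zero.1 this
          exact this.symm
      exact hxne (funext fun i => by rw [const_of_step x hdiff i, h0]; simp)
    · exact hlt
  have hb := count_le_of_negdef hA (LinearMap.ker Φ) hnegdef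
  have hrn := LinearMap.finrank_range_add_finrank_ker Φ
  have hcod : Module.finrank ℝ (({ i // i ∈ S } → ℝ) × ℝ) = S.card + 1 := by
    simp [Module.finrank_prod, Module.finrank_fintype_fun_eq_card, Fintype.card_coe]
  have hrange : Module.finrank ℝ (LinearMap.range Φ) ≤ S.card + 1 := by
    rw [← hcod]; exact (LinearMap.range Φ).finrank_le
  have hdom : Module.finrank ℝ (Fin N → ℝ) = N := by
    simp [Module.finrank_fintype_fun_eq_card]
  rw [hdom] at hrn
  omega

end Stmt8Aux

set_option maxHeartbeats 2000000 in
/-- For a generic framework on the `(n+3)`-cycle in `ℝ¹` with `f` forward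
edges and `b` backward edges, every nonzero equilibrium stress matrix has signature
`(f-1, 2, b-1)` or `(b-1, 2, f-1)`. -/
theorem stmt8 (n : ℕ) (p : Fin (n + 3) → ℝ)
    (hgen : AlgebraicIndependent ℚ p)
    (f b : ℕ)
    (hf : f = (Finset.univ.filter fun i : Fin (n + 3) => p i < p (i + 1)).card)
    (hb : b = (Finset.univ.filter fun i : Fin (n + 3) => p (i + 1) < p i).card)
    (hfb : f + b = n + 3) (hf1 : 1 ≤ f) (hb1 : 1 ≤ b)
    (Ω : Matrix (Fin (n + 3)) (Fin (n + 3)) ℝ)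
    (hΩ : IsCycleStressMatrix n p Ω) (hne : Ω ≠ 0) :
    (posCount Ω = f - 1 ∧ zeroCount Ω = 2 ∧ negCount Ω = b - 1) ∨
    (posCount Ω = b - 1 ∧ zeroCount Ω = 2 ∧ negCount Ω = f - 1) := by
  classical
  obtain ⟨hherm, hsupp, hrowsum, hequil⟩ := hΩ
  -- basic Fin facts
  have hone : (1 : Fin (n + 3)) ≠ 0 := by
    intro h
    have := congrArg Fin.val h
    simp [Fin.val_one] at this
  have htwo : (2 : Fin (n + 3)) ≠ 0 := by
    intro h
    have h2 : ((2 : Fin (n + 3)) : ℕ) = 2 := by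
      show ((1 + 1 : Fin (n + 3)) : ℕ) = 2
      rw [Fin.val_add]
      simp [Fin.val_one, Nat.mod_eq_of_lt (show 1 + 1 < n + 3 by omega)]
    rw [h] at h2
    simp at h2
  have hadd1 : ∀ i : Fin (n + 3), i + 1 ≠ i := by
    intro i h
    exact hone (by rwa [add_eq_left] at h)
  have hsub1 : ∀ i : Fin (n + 3), i - 1 ≠ i := by
    intro i h
    rw [sub_eq_self] at h
    exact hone h
  have hsubadd : ∀ i : Fin (n + 3), i - 1 ≠ i + 1 := by
    intro i h
    have : i = i + 1 + 1 := by
      rw [← h]; rw [sub_add_cancel]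
    rw [add_assoc] at this
    have := (left_eq_add.1 this)
    exact htwo (by
      have h11 : (1 : Fin (n + 3)) + 1 = 2 := by ext; simp [Fin.val_add]
      rwa [h11] at this)
  have hsym : ∀ i j, Ω i j = Ω j i := fun i j => by
    have h := hherm.apply j i
    simpa using h
  have hzero : ∀ i j, j ≠ i - 1 → j ≠ i → j ≠ i + 1 → Ω i j = 0 := by
    intro i j h1 h2 h3
    by_contra h
    rcases hsupp i j h with rfl | rfl | h'
    · exact h2 rfl
    · exact h3 rfl
    · exact h1 (by rw [h']; rw [add_sub_cancel_right])
  -- sum over the three-element support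
  have hsum3 : ∀ (g : Fin (n + 3) → ℝ) (i : Fin (n + 3)), (∀ j, j ≠ i - 1 → j ≠ i → j ≠ i + 1 → g j = 0) →
      ∑ j, g j = g (i - 1) + g i + g (i + 1) := by
    intro g i hg
    have hsub : ∑ j, g j = ∑ j ∈ ({i - 1, i, i + 1} : Finset (Fin (n + 3))), g j := by
      symm
      apply Finset.sum_subset (Finset.subset_univ _)
      intro j _ hj
      simp only [Finset.mem_insert, Finset.mem_singleton, not_or] at hj
      exact hg j hj.1 hj.2.1 hj.2.2
    rw [hsub]
    rw [Finset.sum_insert (by simp [hsub1 i, hsubadd i]),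
      Finset.sum_insert (by simp only [Finset.mem_singleton]; exact fun h => hadd1 i h.symm), Finset.sum_singleton]
    ring
  have hrow : ∀ i, Ω i (i - 1) + Ω i i + Ω i (i + 1) = 0 := by
    intro i
    rw [← hsum3 (fun j => Ω i j) i (fun j h1 h2 h3 => hzero i j h1 h2 h3)]
    exact hrowsum i
  have heqp : ∀ i, Ω i (i - 1) * p (i - 1) + Ω i i * p i + Ω i (i + 1) * p (i + 1) = 0 := by
    intro i
    rw [← hsum3 (fun j => Ω i j * p j) i (fun j h1 h2 h3 => by
      simp [hzero i j h1 h2 h3])]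
    exact hequil i
  have hbal : ∀ i, Ω i (i - 1) * (p (i - 1) - p i) + Ω i (i + 1) * (p (i + 1) - p i) = 0 := by
    intro i
    linear_combination heqp i - p i * hrow i
  -- the scaled stress is constant around the cycle
  set t : Fin (n + 3) → ℝ := fun i => Ω i (i + 1) * (p (i + 1) - p i) with ht
  have hstept : ∀ i : Fin (n + 3), t (i + 1) = t i := by
    intro i
    have h := hbal (i + 1)
    rw [add_sub_cancel_right] at h
    rw [hsym (i + 1) i] at h
    show Ω (i + 1) (i + 1 + 1) * (p (i + 1 + 1) - p (i + 1)) = Ω i (i + 1) * (p (i + 1) - p i)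
    linear_combination h
  have hconst : ∀ i, t i = t 0 := Stmt8Aux.const_of_step t hstept
  set c : ℝ := t 0 with hc
  have hinj : Function.Injective p := hgen.injective
  have hΔ : ∀ i : Fin (n + 3), p (i + 1) ≠ p i := fun i h => hadd1 i (hinj h)
  -- c ≠ 0
  have hcne : c ≠ 0 := by
    intro hc0
    apply hne
    have hoff : ∀ i : Fin (n + 3), Ω i (i + 1) = 0 := by
      intro i
      have hti : Ω i (i + 1) * (p (i + 1) - p i) = 0 := (hconst i).trans hc0
      rcases mul_eq_zero.1 hti with h | h
      · exact h
      · exact absurd (sub_eq_zero.1 h) (hΔ i)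
    have hoff' : ∀ i : Fin (n + 3), Ω i (i - 1) = 0 := by
      intro i
      rw [hsym i (i - 1)]
      have : Ω (i - 1) (i - 1 + 1) = 0 := hoff (i - 1)
      rwa [sub_add_cancel] at this
    have hdiag : ∀ i : Fin (n + 3), Ω i i = 0 := by
      intro i
      have := hrow i
      rw [hoff i, hoff' i] at this
      linarith
    funext i j
    show Ω i j = 0
    by_contra h
    rcases hsupp i j h with rfl | rfl | h'
    · exact h (hdiag i)
    · exact h (hoff i)
    · subst h'
      apply h
      have := hoff' (j + 1)
      rwa [add_sub_cancel_right] at this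
  -- the weights
  set w : Fin (n + 3) → ℝ := fun i => -Ω i (i + 1) with hw
  have hwΔ : ∀ i : Fin (n + 3), w i * (p (i + 1) - p i) = -c := by
    intro i
    have := hconst i
    simp only [hw]
    linear_combination -this
  have hwne : ∀ i : Fin (n + 3), w i ≠ 0 := by
    intro i h
    apply hcne
    have := hwΔ i
    rw [h, zero_mul] at this
    linarith
  -- quadratic form identity
  have hq : ∀ x : Fin (n + 3) → ℝ, x ⬝ᵥ Ω *ᵥ x = ∑ i, w i * (x i - x (i + 1)) ^ 2 := by
    intro x
    set g : Fin (n + 3) → ℝ := fun j => Ω j (j + 1) with hg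
    have hΩsub : ∀ i : Fin (n + 3), Ω i (i - 1) = g (i - 1) := by
      intro i
      rw [hsym i (i - 1)]
      show Ω (i - 1) i = Ω (i - 1) (i - 1 + 1)
      rw [sub_add_cancel]
    have expand : x ⬝ᵥ Ω *ᵥ x
        = ∑ i, x i * (Ω i (i - 1) * x (i - 1) + Ω i i * x i + Ω i (i + 1) * x (i + 1)) := by
      simp only [dotProduct, mulVec]
      apply Finset.sum_congr rfl
      intro i _
      congr 1
      show ∑ j, Ω i j * x j = _
      exact hsum3 (fun j => Ω i j * x j) i (fun j h1 h2 h3 => by simp [hzero i j h1 h2 h3])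
    rw [expand]
    have step2 : ∀ i : Fin (n + 3),
        x i * (Ω i (i - 1) * x (i - 1) + Ω i i * x i + Ω i (i + 1) * x (i + 1))
          = g (i - 1) * (x i * x (i - 1) - x i ^ 2) + g i * (x i * x (i + 1) - x i ^ 2) := by
      intro i
      have hr := hrow i
      rw [hΩsub i] at hr
      rw [hΩsub i]
      show x i * (g (i - 1) * x (i - 1) + Ω i i * x i + g i * x (i + 1)) = _
      linear_combination (x i ^ 2) * hr
    rw [Finset.sum_congr rfl fun i _ => step2 i, Finset.sum_add_distrib]
    have reindex : ∑ i : Fin (n + 3), g (i - 1) * (x i * x (i - 1) - x i ^ 2)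
        = ∑ i : Fin (n + 3), g i * (x (i + 1) * x i - x (i + 1) ^ 2) := by
      refine (Fintype.sum_equiv (Equiv.addRight (1 : Fin (n + 3)))
        (fun i => g i * (x (i + 1) * x i - x (i + 1) ^ 2))
        (fun j => g (j - 1) * (x j * x (j - 1) - x j ^ 2)) ?_).symm
      intro i
      simp [Equiv.coe_addRight, add_sub_cancel_right]
    rw [reindex, ← Finset.sum_add_distrib]
    apply Finset.sum_congr rfl
    intro i _
    show g i * (x (i + 1) * x i - x (i + 1) ^ 2) + g i * (x i * x (i + 1) - x i ^ 2)
      = -g i * (x i - x (i + 1)) ^ 2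
    ring
  -- kernel contains constants and p
  have hker1 : Ω *ᵥ (fun _ => (1:ℝ)) = 0 := by
    funext i
    simp only [mulVec, dotProduct, mul_one]
    exact hrowsum i
  have hkerp : Ω *ᵥ p = 0 := by
    funext i
    simp only [mulVec, dotProduct]
    exact hequil i
  have hpne : p ≠ 0 := by
    intro h
    apply hΔ 0
    rw [h]; simp
  have hLI : LinearIndependent ℝ ![(fun _ => (1:ℝ) : Fin (n + 3) → ℝ), p] := by
    rw [linearIndependent_fin2]
    refine ⟨hpne, fun a h => ?_⟩
    have h0 := congrFun h 0
    have h1 := congrFun h 1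
    simp only [Pi.smul_apply, smul_eq_mul] at h0 h1
    apply hΔ 0
    have hane : a ≠ 0 := by
      intro ha; rw [ha, zero_mul] at h0; norm_num at h0
    have : p 0 = p 1 := by
      have := h0.trans h1.symm
      exact mul_left_cancel₀ hane this
    rw [zero_add]
    exact this.symm
  have hkerge : 2 ≤ Module.finrank ℝ (LinearMap.ker Ω.mulVecLin) := by
    have hspan : Submodule.span ℝ (Set.range ![(fun _ => (1:ℝ) : Fin (n + 3) → ℝ), p])
        ≤ LinearMap.ker Ω.mulVecLin := by
      rw [Submodule.span_le]
      rintro v hv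
      simp only [Set.mem_range] at hv
      obtain ⟨k, rfl⟩ := hv
      fin_cases k
      · simpa [LinearMap.mem_ker, Matrix.mulVecLin_apply] using hker1
      · simpa [LinearMap.mem_ker, Matrix.mulVecLin_apply] using hkerp
    have h2 : Module.finrank ℝ
        (Submodule.span ℝ (Set.range ![(fun _ => (1:ℝ) : Fin (n + 3) → ℝ), p])) = 2 := by
      rw [finrank_span_eq_card hLI]
      simp
    calc 2 = _ := h2.symm
      _ ≤ _ := Submodule.finrank_mono hspan
  -- counts
  have hposc : posCount Ω = Fintype.card {i // 0 < hherm.eigenvalues i} := by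
    rw [posCount, dif_pos hherm]
  have hnegc : negCount Ω = Fintype.card {i // hherm.eigenvalues i < 0} := by
    rw [negCount, dif_pos hherm]
  have hzeroc : zeroCount Ω = Fintype.card {i // hherm.eigenvalues i = 0} := by
    rw [zeroCount, dif_pos hherm]
  have hsumc := Stmt8Aux.counts_sum hherm
  have hzero2 : 2 ≤ zeroCount Ω := by
    rw [hzeroc, Stmt8Aux.zero_eigs_eq_nullity hherm]
    exact hkerge
  have hposlb := Stmt8Aux.posdef_subspace_bound hherm w hq hwne
  have hneglb := Stmt8Aux.negdef_subspace_bound hherm w hq hwne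
  rw [← hposc] at hposlb
  rw [← hnegc] at hneglb
  rw [← hposc, ← hnegc, ← hzeroc] at hsumc
  rcases lt_or_gt_of_ne hcne with hclt | hcgt
  · -- c < 0 : positive weights are forward edges
    have hP : Finset.univ.filter (fun i : Fin (n + 3) => 0 < w i)
        = Finset.univ.filter (fun i : Fin (n + 3) => p i < p (i + 1)) := by
      apply Finset.filter_congr
      intro i _
      have h := hwΔ i
      constructor
      · intro hi; nlinarith
      · intro hi; nlinarith
    have hB : Finset.univ.filter (fun i : Fin (n + 3) => w i < 0)
        = Finset.univ.filter (fun i : Fin (n + 3) => p (i + 1) < p i) := by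
      apply Finset.filter_congr
      intro i _
      have h := hwΔ i
      constructor
      · intro hi; nlinarith
      · intro hi; nlinarith
    rw [hB, ← hb] at hposlb
    rw [hP, ← hf] at hneglb
    left
    omega
  · -- c > 0 : positive weights are backward edges
    have hP : Finset.univ.filter (fun i : Fin (n + 3) => 0 < w i)
        = Finset.univ.filter (fun i : Fin (n + 3) => p (i + 1) < p i) := by
      apply Finset.filter_congr
      intro i _
      have h := hwΔ i
      constructor
      · intro hi; nlinarith
      · intro hi; nlinarith
    have hB : Finset.univ.filter (fun i : Fin (n + 3) => w i < 0)
        = Finset.univ.filter (fun i : Fin (n + 3) => p i < p (i + 1)) := by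
      apply Finset.filter_congr
      intro i _
      have h := hwΔ i
      constructor
      · intro hi; nlinarith
      · intro hi; nlinarith
    rw [hB, ← hf] at hposlb
    rw [hP, ← hb] at hneglb
    right
    omega
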